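/- SIZE(2^n/n) is meager in Cantor space: assuming for every sufficiently large n there exists a Boolean function on n variables with circuit complexity greater than 2^n/n, the class SIZE(2^n/n), viewed as a subset of Cantor space via characteristic sequences, is a meager subset of Cantor space (in the product topology). -/

import Mathlib

open Filter

/-- `w` is a prefix of the infinite binary sequence `S`. -/
def SeqPrefix (w : List Bool) (S : ℕ → Bool) : Prop :=
  ∀ i, i < w.length → w.getD i false = S i

/-- A constructor: a total function with `x` a proper prefix of `δ x`. -/
def IsConstructor (δ : List Bool → List Bool) : Prop :=
  ∀ x, x <+: δ x ∧ x ≠ δ x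

/-- `S` is the result `R(δ)`: it extends every iterate `δ^[n] λ`. -/
def IsResultOf (δ : List Bool → List Bool) (S : ℕ → Bool) : Prop :=
  ∀ n, SeqPrefix (δ^[n] []) S

/-- Boolean circuits over the basis of all binary gates, with inputs and constants. -/
inductive Circuit (n : ℕ) where
  | input : Fin n → Circuit n
  | const : Bool → Circuit n
  | gate : (Bool → Bool → Bool) → Circuit n → Circuit n → Circuit n

/-- Number of gates of a circuit. -/
def Circuit.size {n : ℕ} : Circuit n → ℕ
  | .input _ => 0
  | .const _ => 0
  | .gate _ a b => a.size + b.size + 1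

/-- Evaluation of a circuit on an input assignment. -/
def Circuit.eval {n : ℕ} (x : Fin n → Bool) : Circuit n → Bool
  | .input i => x i
  | .const b => b
  | .gate g a b => g (a.eval x) (b.eval x)

/-- Circuit complexity: the minimum number of gates needed to compute `f`. -/
noncomputable def circuitComplexity {n : ℕ} (f : (Fin n → Bool) → Bool) : ℕ :=
  sInf {s | ∃ C : Circuit n, C.size ≤ s ∧ ∀ x, C.eval x = f x}

/-- Index of a length-`n` string in lexicographic order (most significant bit first). -/
def strIndex {n : ℕ} (x : Fin n → Bool) : ℕ :=
  ∑ i : Fin n, cond (x i) (2 ^ (n - 1 - i.val)) 0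

/-- The Boolean function at length `n` of the language with characteristic sequence `S`:
determined by the bits at positions `2^n - 1, …, 2^(n+1) - 2`. -/
def seqFnAt (S : ℕ → Bool) (n : ℕ) : (Fin n → Bool) → Bool :=
  fun x => S (2 ^ n - 1 + strIndex x)

/-- The Boolean function on `n` variables whose truth table is the string `w`. -/
def ttFn (n : ℕ) (w : List Bool) : (Fin n → Bool) → Bool :=
  fun x => w.getD (strIndex x) false

/-- `SIZE(s(n))` for Cantor-space points: eventually, the function at length `n`
has a circuit of size at most `s n`. -/
noncomputable def SIZEc (s : ℕ → ℕ) : Set (ℕ → Bool) :=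
  {S | ∀ᶠ n in Filter.atTop, circuitComplexity (seqFnAt S n) ≤ s n}

lemma strIndex_injective {n : ℕ} : Function.Injective (strIndex (n := n)) := by
  intro x y h
  have einj : Function.Injective (fun i : Fin n => n - 1 - i.val) := by
    intro i j hij
    have hi : i.val ≤ n - 1 := Nat.le_sub_one_of_lt i.isLt
    have hj : j.val ≤ n - 1 := Nat.le_sub_one_of_lt j.isLt
    have hij' : n - 1 - i.val = n - 1 - j.val := hij
    have : i.val = j.val := by omega
    exact Fin.ext this
  have key : ∀ z : Fin n → Bool, strIndex z =
      ∑ k ∈ (Finset.univ.filter (fun i => z i = true)).image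
        (fun i : Fin n => n - 1 - i.val), 2 ^ k := by
    intro z
    rw [Finset.sum_image (fun a _ b _ hab => einj hab)]
    unfold strIndex
    rw [Finset.sum_filter]
    apply Finset.sum_congr rfl
    intro i _
    cases z i <;> simp
  rw [key, key] at h
  have himg := Finset.geomSum_injective (le_refl 2) h
  have hfil := Finset.image_injective einj himg
  funext i
  have := Finset.ext_iff.mp hfil i
  simp only [Finset.mem_filter, Finset.mem_univ, true_and] at this
  cases hx : x i <;> cases hy : y i <;> simp_all

lemma isOpen_hardAt (n : ℕ) :
    IsOpen {S : ℕ → Bool | 2 ^ n / n < circuitComplexity (seqFnAt S n)} := by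
  have hc : Continuous (fun S : ℕ → Bool => seqFnAt S n) :=
    continuous_pi fun x => continuous_apply _
  exact hc.isOpen_preimage {f | 2 ^ n / n < circuitComplexity f} (isOpen_discrete _)

/-- assuming hard functions exist at all sufficiently large lengths,
`SIZE(2^n/n)` is a meager subset of Cantor space. -/
theorem stmt18
    (hhard : ∀ᶠ n in Filter.atTop,
      ∃ g : (Fin n → Bool) → Bool, circuitComplexity g > 2 ^ n / n) :
    IsMeagre (SIZEc (fun n => 2 ^ n / n)) := by
  obtain ⟨M, hM⟩ := eventually_atTop.mp hhard
  have hsub : SIZEc (fun n => 2 ^ n / n) ⊆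
      ⋃ N, {S : ℕ → Bool | ∀ n, N ≤ n → circuitComplexity (seqFnAt S n) ≤ 2 ^ n / n} := by
    intro S hS
    obtain ⟨N, hN⟩ := eventually_atTop.mp hS
    exact Set.mem_iUnion.mpr ⟨N, hN⟩
  refine (isMeagre_iUnion fun N => ?_).mono hsub
  set U : Set (ℕ → Bool) :=
    ⋃ n, ⋃ (_ : max N M ≤ n), {S : ℕ → Bool | 2 ^ n / n < circuitComplexity (seqFnAt S n)}
    with hU
  have hUopen : IsOpen U := isOpen_iUnion fun n => isOpen_iUnion fun _ => isOpen_hardAt n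
  have hUdense : Dense U := by
    rw [dense_iff_inter_open]
    rintro V hV ⟨S, hSV⟩
    obtain ⟨I, u, hu, hpi⟩ := isOpen_pi_iff.mp hV S hSV
    set n := max (max N M) (I.sup id + 1) with hn
    have hKn : max N M ≤ n := le_max_left _ _
    have hMn : M ≤ n := le_trans (le_max_right N M) hKn
    obtain ⟨g, hg⟩ := hM n hMn
    have hn2 : n ≤ 2 ^ n - 1 := by
      have : n < 2 ^ n := Nat.lt_two_pow_self
      omega
    set S' : ℕ → Bool := fun i =>
      if h : ∃ x : Fin n → Bool, 2 ^ n - 1 + strIndex x = i then g h.choose else S i with hS'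
    have hfn : seqFnAt S' n = g := by
      funext x
      have hex : ∃ y : Fin n → Bool,
          2 ^ n - 1 + strIndex y = 2 ^ n - 1 + strIndex x := ⟨x, rfl⟩
      show S' (2 ^ n - 1 + strIndex x) = g x
      rw [hS']
      simp only [dif_pos hex]
      congr 1
      have hcs := hex.choose_spec
      exact strIndex_injective (by omega)
    have hS'V : S' ∈ V := by
      apply hpi
      intro i hi
      have hiI : i ∈ I := hi
      have hlt : i < 2 ^ n - 1 := by
        have h1 : i ≤ I.sup id := Finset.le_sup (f := id) hiI
        have h2 : I.sup id + 1 ≤ n := le_max_right _ _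
        omega
      have hno : ¬ ∃ x : Fin n → Bool, 2 ^ n - 1 + strIndex x = i := by
        rintro ⟨x, hx⟩; omega
      show S' i ∈ u i
      rw [hS']
      simp only [dif_neg hno]
      exact (hu i hiI).2
    refine ⟨S', hS'V, ?_⟩
    refine Set.mem_iUnion.mpr ⟨n, Set.mem_iUnion.mpr ⟨hKn, ?_⟩⟩
    show 2 ^ n / n < circuitComplexity (seqFnAt S' n)
    rw [hfn]
    exact hg
  have hdisj : U ⊆ {S : ℕ → Bool | ∀ n, N ≤ n → circuitComplexity (seqFnAt S n) ≤ 2 ^ n / n}ᶜ := by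
    intro S hSU hSA
    obtain ⟨n, hn⟩ := Set.mem_iUnion.mp hSU
    obtain ⟨hKn, hlt⟩ := Set.mem_iUnion.mp hn
    exact absurd (hSA n (le_trans (le_max_left N M) hKn)) (not_le.mpr hlt)
  exact Filter.mem_of_superset (residual_of_dense_open hUopen hUdense) hdisj
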